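/- arXiv:2008.02154 — 2 statements merged into one kernel-verified Lean document; each statement's English description precedes it below -/
import Mathlib

section
/- Suppose the minimizer x* of f is well separated: for every ε > 0, inf{ f(x) : x ∈ X, ‖x − x*‖ ≥ ε } > f(x*). Let x_n : Θ → X be measurable random variables satisfying g_n(x_n(θ))(θ) = min_{x ∈ X} g_n(x)(θ) for every θ (such minimizers exist since g_n is continuous on the compact set X). Then x_n → x* in probability as n → ∞. -/
open MeasureTheory ProbabilityTheory Filter

open Topology in
/-- SLLN specialized to compositions with a continuous function. -/
theorem nbro_aux_slln {l : ℕ} {Θ : Type*} [MeasurableSpace Θ]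
    (μ : Measure Θ) [IsProbabilityMeasure μ]
    (Ω : Set (EuclideanSpace ℝ (Fin l))) (hΩ : IsCompact Ω)
    (Pc : Measure (EuclideanSpace ℝ (Fin l)))
    (ξ : ℕ → Θ → EuclideanSpace ℝ (Fin l))
    (hξmeas : ∀ i, Measurable (ξ i))
    (hξindep : iIndepFun ξ μ)
    (hξlaw : ∀ i, Measure.map (ξ i) μ = Pc)
    (hξΩ : ∀ i θ, ξ i θ ∈ Ω)
    (u : EuclideanSpace ℝ (Fin l) → ℝ) (hu : Continuous u) :
    ∀ᵐ θ ∂μ, Tendsto (fun n : ℕ => (∑ i ∈ Finset.range n, u (ξ i θ)) / n) atTop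
      (𝓝 (∫ ζ, u ζ ∂Pc)) := by
  obtain ⟨C, hC⟩ := hΩ.exists_bound_of_continuousOn hu.continuousOn
  have hmeas : ∀ i, Measurable fun θ => u (ξ i θ) := fun i => hu.measurable.comp (hξmeas i)
  have hint : Integrable (fun θ => u (ξ 0 θ)) μ := by
    refine (integrable_const C).mono' (hmeas 0).aestronglyMeasurable ?_
    exact Eventually.of_forall fun θ => hC _ (hξΩ 0 θ)
  have hindep : Pairwise (Function.onFun (IndepFun · · μ) fun i θ => u (ξ i θ)) := by
    intro i j hij
    exact (hξindep.indepFun hij).comp hu.measurable hu.measurable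
  have hident : ∀ i, IdentDistrib (fun θ => u (ξ i θ)) (fun θ => u (ξ 0 θ)) μ μ := by
    intro i
    have : IdentDistrib (ξ i) (ξ 0) μ μ :=
      ⟨(hξmeas i).aemeasurable, (hξmeas 0).aemeasurable, by rw [hξlaw, hξlaw]⟩
    exact this.comp hu.measurable
  have hsl := strong_law_ae_real _ hint hindep hident
  have key : ∫ θ, u (ξ 0 θ) ∂μ = ∫ ζ, u ζ ∂Pc := by
    rw [← hξlaw 0, integral_map (hξmeas 0).aemeasurable hu.aestronglyMeasurable]
  rw [key] at hsl
  exact hsl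

open Topology in
/-- Theorem 1(ii): consistency of the NBRO optimal solution. -/
theorem nbro_solution_consistency
    {l d : ℕ} {Θ : Type*} [MeasurableSpace Θ]
    (μ : Measure Θ) [IsProbabilityMeasure μ]
    (Ω : Set (EuclideanSpace ℝ (Fin l))) (hΩ : IsCompact Ω)
    (Pc : Measure (EuclideanSpace ℝ (Fin l))) [IsProbabilityMeasure Pc]
    (hPcΩ : Pc Ωᶜ = 0)
    (ξ : ℕ → Θ → EuclideanSpace ℝ (Fin l))
    (hξmeas : ∀ i, Measurable (ξ i))
    (hξindep : iIndepFun ξ μ)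
    (hξlaw : ∀ i, Measure.map (ξ i) μ = Pc)
    (hξΩ : ∀ i θ, ξ i θ ∈ Ω)
    (X : Set (EuclideanSpace ℝ (Fin d))) (hX : IsCompact X)
    (h : EuclideanSpace ℝ (Fin d) → EuclideanSpace ℝ (Fin l) → ℝ)
    (L1 L2 : ℝ) (hL1 : 0 < L1) (hL2 : 0 < L2)
    (hLip1 : ∀ x ζ₁ ζ₂, |h x ζ₁ - h x ζ₂| ≤ L1 * ‖ζ₁ - ζ₂‖)
    (hLip2 : ∀ x₁ x₂ ζ, |h x₁ ζ - h x₂ ζ| ≤ L2 * ‖x₁ - x₂‖)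
    (α : ℝ) (hα : 0 < α)
    (P0 : Measure (EuclideanSpace ℝ (Fin l))) [IsProbabilityMeasure P0]
    (hP0Ω : P0 Ωᶜ = 0)
    (g : ℕ → EuclideanSpace ℝ (Fin d) → Θ → ℝ)
    (hg : ∀ n x θ, g n x θ =
      (α / (α + n)) * (∫ ζ, h x ζ ∂P0)
        + (1 / (α + n)) * ∑ j ∈ Finset.range n, h x (ξ j θ))
    (f : EuclideanSpace ℝ (Fin d) → ℝ)
    (hf : ∀ x, f x = ∫ ζ, h x ζ ∂Pc)
    (xstar : EuclideanSpace ℝ (Fin d)) (hxstar : xstar ∈ X)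
    (hmin : ∀ x ∈ X, f xstar ≤ f x)
    (hsep : ∀ ε > (0 : ℝ), ∃ δ > (0 : ℝ), ∀ x ∈ X, ε ≤ ‖x - xstar‖ → f xstar + δ ≤ f x)
    (xn : ℕ → Θ → EuclideanSpace ℝ (Fin d))
    (hxnmeas : ∀ n, Measurable (xn n))
    (hxnX : ∀ n θ, xn n θ ∈ X)
    (hxnmin : ∀ n θ, ∀ x ∈ X, g n (xn n θ) θ ≤ g n x θ) :
    TendstoInMeasure μ xn atTop (fun _ => xstar) := by
  -- continuity of h x
  have hcont : ∀ x, Continuous (h x) := by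
    intro x
    refine (LipschitzWith.of_dist_le_mul (K := L1.toNNReal) (f := h x) ?_).continuous
    intro a b
    rw [Real.dist_eq, dist_eq_norm, Real.coe_toNNReal _ hL1.le]
    exact hLip1 x a b
  -- positivity of α + n
  have hαn : ∀ n : ℕ, (0:ℝ) < α + n := fun n => by positivity
  -- a.e. concentration
  have haePc : ∀ᵐ ζ ∂Pc, ζ ∈ Ω := by
    rw [ae_iff]; exact hPcΩ
  have haeP0 : ∀ᵐ ζ ∂P0, ζ ∈ Ω := by
    rw [ae_iff]; exact hP0Ω
  -- integrability of h x w.r.t. Pc and P0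
  have hintPc : ∀ x, Integrable (h x) Pc := by
    intro x
    obtain ⟨C, hC⟩ := hΩ.exists_bound_of_continuousOn (hcont x).continuousOn
    refine (integrable_const C).mono' (hcont x).aestronglyMeasurable ?_
    filter_upwards [haePc] with ζ hζ using hC _ hζ
  have hintP0 : ∀ x, Integrable (h x) P0 := by
    intro x
    obtain ⟨C, hC⟩ := hΩ.exists_bound_of_continuousOn (hcont x).continuousOn
    refine (integrable_const C).mono' (hcont x).aestronglyMeasurable ?_
    filter_upwards [haeP0] with ζ hζ using hC _ hζ
  -- Lipschitz estimate for integrals with respect to any probability measure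
  have hIntLip : ∀ (P : Measure (EuclideanSpace ℝ (Fin l))) [IsProbabilityMeasure P],
      (∀ x, Integrable (h x) P) →
      ∀ x₁ x₂, |(∫ ζ, h x₁ ζ ∂P) - ∫ ζ, h x₂ ζ ∂P| ≤ L2 * ‖x₁ - x₂‖ := by
    intro P _ hint x₁ x₂
    rw [← integral_sub (hint x₁) (hint x₂)]
    have := norm_integral_le_of_norm_le_const
      (μ := P) (C := L2 * ‖x₁ - x₂‖) (f := fun ζ => h x₁ ζ - h x₂ ζ)
      (Eventually.of_forall fun ζ => by simpa using hLip2 x₁ x₂ ζ)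
    simpa using this
  -- Lipschitz estimate for f
  have hfLip : ∀ x₁ x₂, |f x₁ - f x₂| ≤ L2 * ‖x₁ - x₂‖ := by
    intro x₁ x₂; rw [hf, hf]; exact hIntLip Pc hintPc x₁ x₂
  -- Lipschitz estimate for g n
  have hgLip : ∀ n θ x₁ x₂, |g n x₁ θ - g n x₂ θ| ≤ L2 * ‖x₁ - x₂‖ := by
    intro n θ x₁ x₂
    rw [hg, hg]
    have h1 : |(α / (α + n)) * ((∫ ζ, h x₁ ζ ∂P0) - ∫ ζ, h x₂ ζ ∂P0)|
        ≤ (α / (α + n)) * (L2 * ‖x₁ - x₂‖) := by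
      rw [abs_mul, abs_of_pos (by positivity : (0:ℝ) < α / (α + n))]
      exact mul_le_mul_of_nonneg_left (hIntLip P0 hintP0 x₁ x₂) (by positivity)
    have h2 : |(1 / (α + n)) * ((∑ j ∈ Finset.range n, h x₁ (ξ j θ))
          - ∑ j ∈ Finset.range n, h x₂ (ξ j θ))|
        ≤ (1 / (α + n)) * ((n : ℝ) * (L2 * ‖x₁ - x₂‖)) := by
      rw [abs_mul, abs_of_pos (by positivity : (0:ℝ) < 1 / (α + n)), ← Finset.sum_sub_distrib]
      refine mul_le_mul_of_nonneg_left ?_ (by positivity)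
      calc |∑ j ∈ Finset.range n, (h x₁ (ξ j θ) - h x₂ (ξ j θ))|
          ≤ ∑ j ∈ Finset.range n, |h x₁ (ξ j θ) - h x₂ (ξ j θ)| :=
            Finset.abs_sum_le_sum_abs _ _
        _ ≤ ∑ j ∈ Finset.range n, L2 * ‖x₁ - x₂‖ :=
            Finset.sum_le_sum fun j _ => hLip2 x₁ x₂ (ξ j θ)
        _ = (n : ℝ) * (L2 * ‖x₁ - x₂‖) := by simp [mul_comm]
    calc |((α / (α + n)) * (∫ ζ, h x₁ ζ ∂P0) + (1 / (α + n)) * ∑ j ∈ Finset.range n, h x₁ (ξ j θ))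
          - ((α / (α + n)) * (∫ ζ, h x₂ ζ ∂P0) + (1 / (α + n)) * ∑ j ∈ Finset.range n, h x₂ (ξ j θ))|
        = |(α / (α + n)) * ((∫ ζ, h x₁ ζ ∂P0) - ∫ ζ, h x₂ ζ ∂P0)
            + (1 / (α + n)) * ((∑ j ∈ Finset.range n, h x₁ (ξ j θ))
              - ∑ j ∈ Finset.range n, h x₂ (ξ j θ))| := by ring_nf
      _ ≤ _ + _ := abs_add_le _ _
      _ ≤ (α / (α + n)) * (L2 * ‖x₁ - x₂‖) + (1 / (α + n)) * ((n : ℝ) * (L2 * ‖x₁ - x₂‖)) :=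
          add_le_add h1 h2
      _ = L2 * ‖x₁ - x₂‖ := by field_simp
  -- pointwise a.e. convergence of g n x to f x
  have hptwise : ∀ x, ∀ᵐ θ ∂μ, Tendsto (fun n => g n x θ) atTop (𝓝 (f x)) := by
    intro x
    filter_upwards [nbro_aux_slln μ Ω hΩ Pc ξ hξmeas hξindep hξlaw hξΩ (h x) (hcont x)]
      with θ hθ
    have hden : Tendsto (fun n : ℕ => α + (n:ℝ)) atTop atTop :=
      tendsto_atTop_add_const_left _ α tendsto_natCast_atTop_atTop
    have h1 : Tendsto (fun n : ℕ => α / (α + (n:ℝ))) atTop (𝓝 0) := by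
      simpa [div_eq_mul_inv] using hden.inv_tendsto_atTop.const_mul α
    have h2 : Tendsto (fun n : ℕ => (n:ℝ) / (α + n)) atTop (𝓝 1) := by
      have : Tendsto (fun n : ℕ => 1 - α / (α + (n:ℝ))) atTop (𝓝 (1 - 0)) :=
        tendsto_const_nhds.sub h1
      rw [sub_zero] at this
      refine this.congr fun n => ?_
      field_simp; ring
    have : Tendsto (fun n : ℕ => (α / (α + n)) * (∫ ζ, h x ζ ∂P0)
        + ((n:ℝ) / (α + n)) * ((∑ i ∈ Finset.range n, h x (ξ i θ)) / n))
        atTop (𝓝 (0 * (∫ ζ, h x ζ ∂P0) + 1 * f x)) := by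
      rw [hf]
      exact (h1.mul_const _).add (h2.mul hθ)
    rw [zero_mul, zero_add, one_mul] at this
    refine this.congr' ?_
    filter_upwards [eventually_ge_atTop 1] with n hn
    rw [hg]
    have hn0 : (n:ℝ) ≠ 0 := Nat.cast_ne_zero.mpr (by omega)
    congr 1
    rw [div_mul_div_comm, mul_comm ((n:ℝ)) ((∑ i ∈ Finset.range n, h x (ξ i θ)))]
    rw [mul_div_mul_right _ _ hn0, one_div, inv_mul_eq_div]
  -- measurability of g n x
  have hgmeas : ∀ n x, Measurable (g n x) := by
    intro n x
    have heq : g n x = fun θ => (α / (α + n)) * (∫ ζ, h x ζ ∂P0)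
        + (1 / (α + n)) * ∑ j ∈ Finset.range n, h x (ξ j θ) := funext fun θ => hg n x θ
    rw [heq]
    exact measurable_const.add
      ((Finset.measurable_sum _ fun j _ => (hcont x).measurable.comp (hξmeas j)).const_mul _)
  -- per-point convergence in measure
  have hpt_meas : ∀ x (c : ℝ), 0 < c →
      Tendsto (fun n => μ {θ | c ≤ |g n x θ - f x|}) atTop (𝓝 0) := by
    intro x c hc
    have htim : TendstoInMeasure μ (fun n θ => g n x θ) atTop (fun _ => f x) :=
      tendstoInMeasure_of_tendsto_ae (fun n => (hgmeas n x).aestronglyMeasurable) (hptwise x)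
    have := tendstoInMeasure_iff_norm.mp htim c hc
    simpa [Real.dist_eq] using this
  -- main argument
  rw [tendstoInMeasure_iff_norm]
  intro ε hε
  obtain ⟨δ, hδ, hδsep⟩ := hsep ε hε
  -- finite net of X with mesh δ/(8 L2)
  set η : ℝ := δ / (8 * L2) with hη_def
  have hη : 0 < η := by positivity
  obtain ⟨t, htX, htfin, htcov⟩ := hX.finite_cover_balls hη
  classical
  set F : Finset (EuclideanSpace ℝ (Fin d)) := insert xstar htfin.toFinset with hF_def
  -- inclusion of events
  have hincl : ∀ n, {θ | ε ≤ dist (xn n θ) xstar}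
      ⊆ ⋃ y ∈ F, {θ | δ/4 ≤ |g n y θ - f y|} := by
    intro n θ hθ
    simp only [Set.mem_setOf_eq] at hθ
    have hxnθ := hxnX n θ
    have hfsep : f xstar + δ ≤ f (xn n θ) :=
      hδsep _ hxnθ (by rwa [← dist_eq_norm])
    have hgm : g n (xn n θ) θ ≤ g n xstar θ := hxnmin n θ xstar hxstar
    obtain ⟨y, hy, hyd⟩ : ∃ y ∈ t, dist (xn n θ) y < η := by
      have := htcov hxnθ
      simp only [Set.mem_iUnion, Metric.mem_ball] at this
      obtain ⟨y, hy1, hy2⟩ := this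
      exact ⟨y, hy1, hy2⟩
    -- key estimate
    have key : δ ≤ δ/4 + |g n y θ - f y| + |g n xstar θ - f xstar| := by
      have e1 : |f (xn n θ) - f y| ≤ L2 * ‖xn n θ - y‖ := hfLip _ _
      have e2 : |g n y θ - g n (xn n θ) θ| ≤ L2 * ‖y - xn n θ‖ := hgLip n θ _ _
      have hnorm : ‖xn n θ - y‖ < η := by rwa [← dist_eq_norm]
      have hnorm' : ‖y - xn n θ‖ < η := by rwa [norm_sub_rev]
      have hLη : L2 * η = δ / 8 := by
        rw [hη_def]; field_simp
      have e1' : |f (xn n θ) - f y| ≤ δ / 8 :=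
        e1.trans (by nlinarith)
      have e2' : |g n y θ - g n (xn n θ) θ| ≤ δ / 8 :=
        e2.trans (by nlinarith)
      have : δ ≤ f (xn n θ) - f xstar := by linarith
      have expand : f (xn n θ) - f xstar
          = (f (xn n θ) - f y) + (f y - g n y θ) + (g n y θ - g n (xn n θ) θ)
            + (g n (xn n θ) θ - g n xstar θ) + (g n xstar θ - f xstar) := by ring
      have b1 : f (xn n θ) - f y ≤ δ / 8 := (le_abs_self _).trans e1'
      have b2 : f y - g n y θ ≤ |g n y θ - f y| := by rw [abs_sub_comm]; exact le_abs_self _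
      have b3 : g n y θ - g n (xn n θ) θ ≤ δ / 8 := (le_abs_self _).trans e2'
      have b4 : g n (xn n θ) θ - g n xstar θ ≤ 0 := by linarith
      have b5 : g n xstar θ - f xstar ≤ |g n xstar θ - f xstar| := le_abs_self _
      linarith
    by_cases hcase : δ/4 ≤ |g n y θ - f y|
    · refine Set.mem_biUnion ?_ hcase
      exact Finset.mem_insert_of_mem (htfin.mem_toFinset.mpr hy)
    · push_neg at hcase
      refine Set.mem_biUnion (Finset.mem_insert_self _ _) ?_
      show δ/4 ≤ |g n xstar θ - f xstar|
      linarith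
  -- conclude by union bound and squeeze
  have hbound : ∀ n, μ {θ | ε ≤ dist (xn n θ) xstar}
      ≤ ∑ y ∈ F, μ {θ | δ/4 ≤ |g n y θ - f y|} := by
    intro n
    exact (measure_mono (hincl n)).trans (measure_biUnion_finset_le F _)
  have hsum : Tendsto (fun n => ∑ y ∈ F, μ {θ | δ/4 ≤ |g n y θ - f y|}) atTop (𝓝 0) := by
    have := tendsto_finset_sum F (fun y _ => hpt_meas y (δ/4) (by positivity))
    simpa using this
  exact tendsto_of_tendsto_of_tendsto_of_le_of_le tendsto_const_nhds hsum
    (fun n => zero_le) (fun n => by simpa only [dist_eq_norm] using hbound n)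
end

section
/- Suppose the minimizer x* of f is well separated: for every ε > 0, inf{ f(x) : x ∈ X, ‖x − x*‖ ≥ ε } > f(x*). Let x_n : Θ → X be measurable random variables satisfying g_n(x_n(θ))(θ) = min_{x ∈ X} g_n(x)(θ) for every θ. Then the optimal values converge: g_n(x_n) → f(x*) in probability as n → ∞. -/
open MeasureTheory ProbabilityTheory Filter Topology

/-- Theorem 1(iii): consistency of the NBRO optimal value. -/
theorem nbro_optimal_value_consistency
    {l d : ℕ} {Θ : Type*} [MeasurableSpace Θ]
    (μ : Measure Θ) [IsProbabilityMeasure μ]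
    (Ω : Set (EuclideanSpace ℝ (Fin l))) (hΩ : IsCompact Ω)
    (Pc : Measure (EuclideanSpace ℝ (Fin l))) [IsProbabilityMeasure Pc]
    (hPcΩ : Pc Ωᶜ = 0)
    (ξ : ℕ → Θ → EuclideanSpace ℝ (Fin l))
    (hξmeas : ∀ i, Measurable (ξ i))
    (hξindep : iIndepFun ξ μ)
    (hξlaw : ∀ i, Measure.map (ξ i) μ = Pc)
    (hξΩ : ∀ i θ, ξ i θ ∈ Ω)
    (X : Set (EuclideanSpace ℝ (Fin d))) (hX : IsCompact X)
    (h : EuclideanSpace ℝ (Fin d) → EuclideanSpace ℝ (Fin l) → ℝ)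
    (L1 L2 : ℝ) (hL1 : 0 < L1) (hL2 : 0 < L2)
    (hLip1 : ∀ x ζ₁ ζ₂, |h x ζ₁ - h x ζ₂| ≤ L1 * ‖ζ₁ - ζ₂‖)
    (hLip2 : ∀ x₁ x₂ ζ, |h x₁ ζ - h x₂ ζ| ≤ L2 * ‖x₁ - x₂‖)
    (α : ℝ) (hα : 0 < α)
    (P0 : Measure (EuclideanSpace ℝ (Fin l))) [IsProbabilityMeasure P0]
    (hP0Ω : P0 Ωᶜ = 0)
    (g : ℕ → EuclideanSpace ℝ (Fin d) → Θ → ℝ)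
    (hg : ∀ n x θ, g n x θ =
      (α / (α + n)) * (∫ ζ, h x ζ ∂P0)
        + (1 / (α + n)) * ∑ j ∈ Finset.range n, h x (ξ j θ))
    (f : EuclideanSpace ℝ (Fin d) → ℝ)
    (hf : ∀ x, f x = ∫ ζ, h x ζ ∂Pc)
    (xstar : EuclideanSpace ℝ (Fin d)) (hxstar : xstar ∈ X)
    (hmin : ∀ x ∈ X, f xstar ≤ f x)
    (hsep : ∀ ε > (0 : ℝ), ∃ δ > (0 : ℝ), ∀ x ∈ X, ε ≤ ‖x - xstar‖ → f xstar + δ ≤ f x)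
    (xn : ℕ → Θ → EuclideanSpace ℝ (Fin d))
    (hxnmeas : ∀ n, Measurable (xn n))
    (hxnX : ∀ n θ, xn n θ ∈ X)
    (hxnmin : ∀ n θ, ∀ x ∈ X, g n (xn n θ) θ ≤ g n x θ) :
    TendstoInMeasure μ (fun (n : ℕ) (θ : Θ) => g n (xn n θ) θ) atTop
      (fun _ => f xstar) := by
  -- continuity of h x
  have hcont : ∀ x, Continuous (h x) := fun x =>
    (LipschitzWith.of_dist_le_mul (K := ⟨L1, hL1.le⟩) (fun ζ₁ ζ₂ => by
      rw [Real.dist_eq, dist_eq_norm]; exact hLip1 x ζ₁ ζ₂)).continuous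
  -- boundedness on Ω
  have hbd : ∀ x : EuclideanSpace ℝ (Fin d), ∃ C : ℝ, ∀ ζ ∈ Ω, ‖h x ζ‖ ≤ C := fun x =>
    hΩ.exists_bound_of_continuousOn (hcont x).continuousOn
  -- integrability wrt measures concentrated on Ω
  have hint : ∀ (x : EuclideanSpace ℝ (Fin d)) (ν : Measure (EuclideanSpace ℝ (Fin l)))
      [IsProbabilityMeasure ν], ν Ωᶜ = 0 → Integrable (h x) ν := by
    intro x ν _ hν
    obtain ⟨C, hC⟩ := hbd x
    refine Integrable.mono' (integrable_const C) ((hcont x).aestronglyMeasurable) ?_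
    have hae : ∀ᵐ ζ ∂ν, ζ ∈ Ω := by
      rw [ae_iff]
      exact hν
    filter_upwards [hae] with ζ hζ using hC ζ hζ
  -- Lipschitz estimate on integrals
  have hintLip : ∀ (ν : Measure (EuclideanSpace ℝ (Fin l))) [IsProbabilityMeasure ν],
      ν Ωᶜ = 0 → ∀ x₁ x₂, |(∫ ζ, h x₁ ζ ∂ν) - (∫ ζ, h x₂ ζ ∂ν)| ≤ L2 * ‖x₁ - x₂‖ := by
    intro ν _ hν x₁ x₂
    rw [← integral_sub (hint x₁ ν hν) (hint x₂ ν hν)]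
    have := norm_integral_le_of_norm_le_const (μ := ν)
      (f := fun ζ => h x₁ ζ - h x₂ ζ) (C := L2 * ‖x₁ - x₂‖)
      (Eventually.of_forall fun ζ => by simpa [Real.norm_eq_abs] using hLip2 x₁ x₂ ζ)
    simpa [Real.norm_eq_abs, measure_univ] using this
  have hfLip : ∀ x₁ x₂, |f x₁ - f x₂| ≤ L2 * ‖x₁ - x₂‖ := by
    intro x₁ x₂; rw [hf, hf]; exact hintLip Pc hPcΩ x₁ x₂
  -- g is Lipschitz in x
  have hgLip : ∀ n θ x₁ x₂, |g n x₁ θ - g n x₂ θ| ≤ L2 * ‖x₁ - x₂‖ := by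
    intro n θ x₁ x₂
    have hn : (0:ℝ) < α + n := by positivity
    rw [hg, hg]
    set A := L2 * ‖x₁ - x₂‖ with hA
    have hA0 : 0 ≤ A := by
      have := hLip2 x₁ x₂ (ξ 0 θ)
      exact le_trans (abs_nonneg _) this
    set I₁ := ∫ ζ, h x₁ ζ ∂P0
    set I₂ := ∫ ζ, h x₂ ζ ∂P0
    set S₁ := ∑ j ∈ Finset.range n, h x₁ (ξ j θ)
    set S₂ := ∑ j ∈ Finset.range n, h x₂ (ξ j θ)
    have h1 : |I₁ - I₂| ≤ A := hintLip P0 hP0Ω x₁ x₂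
    have h2 : |S₁ - S₂| ≤ n * A := by
      rw [← Finset.sum_sub_distrib]
      calc |∑ j ∈ Finset.range n, (h x₁ (ξ j θ) - h x₂ (ξ j θ))|
          ≤ ∑ j ∈ Finset.range n, |h x₁ (ξ j θ) - h x₂ (ξ j θ)| :=
            Finset.abs_sum_le_sum_abs _ _
        _ ≤ ∑ _j ∈ Finset.range n, A := Finset.sum_le_sum (fun j _ => hLip2 x₁ x₂ _)
        _ = n * A := by simp [mul_comm]
    have heq : α / (α + n) * I₁ + 1 / (α + n) * S₁ - (α / (α + n) * I₂ + 1 / (α + n) * S₂)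
        = (α / (α + n)) * (I₁ - I₂) + (1 / (α + n)) * (S₁ - S₂) := by ring
    rw [heq]
    have hc1 : (0:ℝ) < α / (α + n) := by positivity
    have hc2 : (0:ℝ) < 1 / (α + n) := by positivity
    have e1 : |(α / (α + n)) * (I₁ - I₂)| ≤ (α / (α + n)) * A := by
      rw [abs_mul, abs_of_pos hc1]
      exact mul_le_mul_of_nonneg_left h1 hc1.le
    have e2 : |(1 / (α + n)) * (S₁ - S₂)| ≤ (1 / (α + n)) * (n * A) := by
      rw [abs_mul, abs_of_pos hc2]
      exact mul_le_mul_of_nonneg_left h2 hc2.le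
    calc |(α / (α + n)) * (I₁ - I₂) + (1 / (α + n)) * (S₁ - S₂)|
        ≤ |(α / (α + n)) * (I₁ - I₂)| + |(1 / (α + n)) * (S₁ - S₂)| := abs_add_le _ _
      _ ≤ (α / (α + n)) * A + (1 / (α + n)) * (n * A) := add_le_add e1 e2
      _ = A := by field_simp
  -- measurability of g n x
  have hgmeas : ∀ n x, Measurable (fun θ => g n x θ) := by
    intro n x
    simp_rw [hg]
    exact measurable_const.add (measurable_const.mul
      (Finset.measurable_sum _ fun j _ => ((hcont x).measurable).comp (hξmeas j)))
  -- almost sure convergence of g n x to f x, for each fixed x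
  have hae : ∀ x, ∀ᵐ θ ∂μ, Tendsto (fun n => g n x θ) atTop (𝓝 (f x)) := by
    intro x
    have hmeasY : ∀ i, Measurable (fun θ => h x (ξ i θ)) :=
      fun i => ((hcont x).measurable).comp (hξmeas i)
    have hintY : Integrable (fun θ => h x (ξ 0 θ)) μ := by
      obtain ⟨C, hC⟩ := hbd x
      refine Integrable.mono' (integrable_const C) (hmeasY 0).aestronglyMeasurable ?_
      exact Eventually.of_forall fun θ => hC _ (hξΩ 0 θ)
    have hindepY : Pairwise (Function.onFun (IndepFun · · μ) fun i θ => h x (ξ i θ)) := by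
      intro i j hij
      exact (hξindep.indepFun hij).comp (hcont x).measurable (hcont x).measurable
    have hidentY : ∀ i, IdentDistrib (fun θ => h x (ξ i θ)) (fun θ => h x (ξ 0 θ)) μ μ := by
      intro i
      have hid : IdentDistrib (ξ i) (ξ 0) μ μ :=
        ⟨(hξmeas i).aemeasurable, (hξmeas 0).aemeasurable, by rw [hξlaw i, hξlaw 0]⟩
      exact hid.comp (hcont x).measurable
    have hslln := strong_law_ae_real _ hintY hindepY hidentY
    have hmean : f x = ∫ θ, h x (ξ 0 θ) ∂μ := by
      rw [hf, ← hξlaw 0, integral_map (hξmeas 0).aemeasurable (hcont x).aestronglyMeasurable]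
    filter_upwards [hslln] with θ hθ
    have hθ' : Tendsto (fun n : ℕ => (∑ i ∈ Finset.range n, h x (ξ i θ)) / n) atTop
        (𝓝 (f x)) := by
      rw [hmean]; exact hθ
    have hA : Tendsto (fun n : ℕ => α / (α + n)) atTop (𝓝 0) :=
      Tendsto.div_atTop tendsto_const_nhds
        (tendsto_atTop_add_const_left _ α tendsto_natCast_atTop_atTop)
    have key : ∀ n : ℕ, g n x θ = (α / (α + n)) * (∫ ζ, h x ζ ∂P0)
        + (1 - α / (α + n)) * ((∑ j ∈ Finset.range n, h x (ξ j θ)) / n) := by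
      intro n
      rw [hg]
      rcases Nat.eq_zero_or_pos n with rfl | hn
      · simp
      · have h1 : (0:ℝ) < α + n := by positivity
        have h2 : (n:ℝ) ≠ 0 := Nat.cast_ne_zero.mpr hn.ne'
        field_simp
        ring
    have hconv : Tendsto (fun n : ℕ => (α / (α + n)) * (∫ ζ, h x ζ ∂P0)
        + (1 - α / (α + n)) * ((∑ j ∈ Finset.range n, h x (ξ j θ)) / n)) atTop
        (𝓝 (0 * (∫ ζ, h x ζ ∂P0) + (1 - 0) * f x)) :=
      (hA.mul tendsto_const_nhds).add ((tendsto_const_nhds.sub hA).mul hθ')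
    have := hconv.congr (fun n => (key n).symm)
    simpa using this
  -- convergence in measure of g n x to f x, for each fixed x
  have hTIM : ∀ x, TendstoInMeasure μ (fun n θ => g n x θ) atTop (fun _ => f x) :=
    fun x => tendstoInMeasure_of_tendsto_ae
      (fun n => (hgmeas n x).aestronglyMeasurable) (hae x)
  -- main argument
  rw [tendstoInMeasure_iff_dist]
  intro ε hε
  set r : ℝ := ε / (8 * L2) with hr
  have hrpos : 0 < r := by positivity
  obtain ⟨t, htX, htfin, htcov⟩ := hX.finite_cover_balls hrpos
  have hLr : L2 * r = ε / 8 := by rw [hr]; field_simp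
  -- key pointwise deterministic bound
  have hkey : ∀ n θ, (∀ y ∈ t, dist (g n y θ) (f y) < ε / 2) →
      dist (g n (xn n θ) θ) (f xstar) < ε := by
    intro n θ hD
    rw [Real.dist_eq, abs_sub_lt_iff]
    constructor
    · -- upper bound using a net point near xstar
      obtain ⟨y, hyt, hy⟩ : ∃ y ∈ t, xstar ∈ Metric.ball y r := by
        have := htcov hxstar
        simpa using this
      have h1 : g n (xn n θ) θ ≤ g n xstar θ := hxnmin n θ xstar hxstar
      have h2 : g n xstar θ - g n y θ ≤ L2 * ‖xstar - y‖ :=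
        le_trans (le_abs_self _) (hgLip n θ _ _)
      have h3 : f y - f xstar ≤ L2 * ‖y - xstar‖ :=
        le_trans (le_abs_self _) (hfLip _ _)
      have h4 : g n y θ - f y < ε / 2 :=
        lt_of_le_of_lt (le_abs_self _) (by rw [← Real.dist_eq]; exact hD y hyt)
      have h5 : ‖xstar - y‖ < r := by
        rw [← dist_eq_norm]; exact Metric.mem_ball.mp hy
      have h6 : ‖y - xstar‖ < r := by rw [norm_sub_rev]; exact h5
      have h7 : L2 * ‖xstar - y‖ ≤ ε / 8 := by
        rw [← hLr]; exact mul_le_mul_of_nonneg_left h5.le hL2.le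
      have h8 : L2 * ‖y - xstar‖ ≤ ε / 8 := by
        rw [← hLr]; exact mul_le_mul_of_nonneg_left h6.le hL2.le
      linarith
    · -- lower bound using a net point near xn n θ
      obtain ⟨y, hyt, hy⟩ : ∃ y ∈ t, xn n θ ∈ Metric.ball y r := by
        have := htcov (hxnX n θ)
        simpa using this
      have h1 : f xstar ≤ f (xn n θ) := hmin _ (hxnX n θ)
      have h2 : f (xn n θ) - f y ≤ L2 * ‖xn n θ - y‖ :=
        le_trans (le_abs_self _) (hfLip _ _)
      have h3 : f y - g n y θ < ε / 2 :=
        lt_of_le_of_lt (le_abs_self _) (by rw [abs_sub_comm, ← Real.dist_eq]; exact hD y hyt)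
      have h4 : g n y θ - g n (xn n θ) θ ≤ L2 * ‖y - xn n θ‖ :=
        le_trans (le_abs_self _) (hgLip n θ _ _)
      have h5 : ‖xn n θ - y‖ < r := by
        rw [← dist_eq_norm]; exact Metric.mem_ball.mp hy
      have h6 : ‖y - xn n θ‖ < r := by rw [norm_sub_rev]; exact h5
      have h7 : L2 * ‖xn n θ - y‖ ≤ ε / 8 := by
        rw [← hLr]; exact mul_le_mul_of_nonneg_left h5.le hL2.le
      have h8 : L2 * ‖y - xn n θ‖ ≤ ε / 8 := by
        rw [← hLr]; exact mul_le_mul_of_nonneg_left h6.le hL2.le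
      linarith
  -- measure bound via the finite net
  have hsub : ∀ n, {θ | ε ≤ dist (g n (xn n θ) θ) (f xstar)} ⊆
      ⋃ y ∈ htfin.toFinset, {θ | ε / 2 ≤ dist (g n y θ) (f y)} := by
    intro n θ hθ
    by_contra hc
    simp only [Set.mem_iUnion, Set.mem_setOf_eq, not_exists, not_le,
      Set.Finite.mem_toFinset] at hc
    exact not_le.mpr (hkey n θ fun y hy => hc y hy) hθ
  have hbound : ∀ n, μ {θ | ε ≤ dist (g n (xn n θ) θ) (f xstar)} ≤
      ∑ y ∈ htfin.toFinset, μ {θ | ε / 2 ≤ dist (g n y θ) (f y)} :=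
    fun n => le_trans (measure_mono (hsub n)) (measure_biUnion_finset_le _ _)
  have hsum : Tendsto (fun n => ∑ y ∈ htfin.toFinset,
      μ {θ | ε / 2 ≤ dist (g n y θ) (f y)}) atTop (𝓝 0) := by
    have h0 : (0 : ENNReal) = ∑ _y ∈ htfin.toFinset, (0 : ENNReal) := by simp
    rw [h0]
    exact tendsto_finset_sum _ (fun y _ => tendstoInMeasure_iff_dist.mp (hTIM y) (ε / 2) (by positivity))
  exact tendsto_of_tendsto_of_tendsto_of_le_of_le tendsto_const_nhds hsum
    (fun n => zero_le) hbound
end
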